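/- Let f : ℂ^n → ℂ^m be a map whose components f_1, …, f_m are homogeneous polynomials of positive degree, and suppose that the image of f is not contained in any proper linear subspace of ℂ^m (equivalently, the image of f spans ℂ^m). Then there exists a positive integer r such that every element of ℂ^m can be written as a sum of r elements of the image of f (and consequently the same holds for every r' ≥ r, since f(0) = 0). -/

import Mathlib

open Finset

lemma block_lemma (k : ℕ) (hk : 1 ≤ k) (t : ℂ) :
    ∃ L : List ℂ, L.length = k ∧
      (∀ d : ℕ, ¬ (k ∣ d) → ((L.map (· ^ d)).sum = 0)) ∧
      (L.map (· ^ k)).sum = t := by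
  obtain ⟨α, hα⟩ := IsAlgClosed.exists_pow_nat_eq (k := ℂ) (t / k) (by omega : 0 < k)
  have hζ := Complex.isPrimitiveRoot_exp k (by omega)
  set ζ := Complex.exp (2 * Real.pi * Complex.I / k) with hζdef
  have key : ∀ d : ℕ, ((((List.range k).map (fun j => ζ ^ j * α)).map (· ^ d)).sum)
      = (∑ j ∈ Finset.range k, (ζ ^ d) ^ j) * α ^ d := by
    intro d
    rw [List.map_map]
    show (∑ j ∈ Finset.range k, (ζ ^ j * α) ^ d) = _
    rw [Finset.sum_mul]
    refine Finset.sum_congr rfl fun j _ => ?_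
    rw [mul_pow, ← pow_mul, ← pow_mul, mul_comm j d]
  refine ⟨(List.range k).map (fun j => ζ ^ j * α), by simp, ?_, ?_⟩
  · intro d hd
    rw [key d]
    have h1 : (ζ : ℂ) ^ d ≠ 1 := fun h => hd ((hζ.pow_eq_one_iff_dvd d).mp h)
    have h2 : ((1 : ℂ) - ζ ^ d) * ∑ j ∈ Finset.range k, (ζ ^ d) ^ j = 1 - (ζ ^ d) ^ k :=
      mul_neg_geom_sum _ _
    have h3 : ((ζ : ℂ) ^ d) ^ k = 1 := by
      rw [← pow_mul, mul_comm, pow_mul, hζ.pow_eq_one, one_pow]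
    rw [h3, sub_self] at h2
    have := eq_zero_of_ne_zero_of_mul_left_eq_zero (sub_ne_zero_of_ne h1.symm) h2
    rw [this, zero_mul]
  · rw [key k]
    have h3 : ∀ j ∈ Finset.range k, ((ζ:ℂ) ^ k) ^ j = 1 := by
      intro j _; rw [hζ.pow_eq_one, one_pow]
    rw [Finset.sum_congr rfl h3, Finset.sum_const, Finset.card_range, nsmul_eq_mul, mul_one, hα]
    have hk0 : (k:ℂ) ≠ 0 := Nat.cast_ne_zero.mpr (by omega)
    field_simp

def lenN : ℕ → ℕ
  | 0 => 0
  | (N+1) => lenN N + (N+1)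

lemma exists_powersum_list (N : ℕ) (c : ℂ) :
    ∃ L : List ℂ, L.length = lenN N ∧ ∀ d : ℕ, 1 ≤ d → d ≤ N → (L.map (· ^ d)).sum = c := by
  induction N with
  | zero => exact ⟨[], rfl, fun d h1 h2 => by omega⟩
  | succ N ih =>
    obtain ⟨L, hlen, hL⟩ := ih
    obtain ⟨L2, hlen2, hzero, htop⟩ :=
      block_lemma (N+1) (by omega) (c - (L.map (· ^ (N+1))).sum)
    refine ⟨L ++ L2, by simp [hlen, hlen2, lenN], ?_⟩
    intro d h1 h2
    rw [List.map_append, List.sum_append]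
    rcases Nat.lt_or_ge d (N+1) with h | h
    · rw [hL d h1 (by omega), hzero d (fun hdvd =>
        absurd (Nat.le_of_dvd (by omega) hdvd) (by omega)), add_zero]
    · have hd : d = N+1 := by omega
      subst hd
      rw [htop]; ring

lemma eval_smul_of_homog {n d : ℕ} {p : MvPolynomial (Fin n) ℂ}
    (hp : p ∈ MvPolynomial.homogeneousSubmodule (Fin n) ℂ d) (x : ℂ) (v : Fin n → ℂ) :
    MvPolynomial.eval (x • v) p = x ^ d * MvPolynomial.eval v p := by
  have hp' : p.IsHomogeneous d := hp
  rw [MvPolynomial.eval_eq', MvPolynomial.eval_eq', Finset.mul_sum]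
  refine Finset.sum_congr rfl fun u hu => ?_
  have hdeg : ∑ i : Fin n, u i = d := by
    have h1 := hp' (MvPolynomial.mem_support_iff.mp hu)
    rw [Finsupp.weight_apply] at h1
    simp only [Pi.one_apply, smul_eq_mul, mul_one] at h1
    rw [Finsupp.sum] at h1
    rw [← h1]
    exact (Finset.sum_subset (Finset.subset_univ _)
      (fun i _ hi => Finsupp.notMem_support_iff.mp hi)).symm
  have : ∏ i : Fin n, (x • v) i ^ u i = x ^ d * ∏ i : Fin n, v i ^ u i := by
    simp only [Pi.smul_apply, smul_eq_mul, mul_pow]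
    rw [Finset.prod_mul_distrib, Finset.prod_pow_eq_pow_sum, hdeg]
  rw [this]; ring

lemma exists_fn {α γ : Type*} [AddCommMonoid γ] (f : α → γ) (L : List α) (r : ℕ)
    (h : L.length = r) : ∃ g : Fin r → α, (L.map f).sum = ∑ i, f (g i) := by
  subst h
  refine ⟨L.get, ?_⟩
  conv_lhs => rw [← List.ofFn_get L]
  rw [List.map_ofFn, List.sum_ofFn]
  rfl


/-- Let `f : ℂ^n → ℂ^m` be a map whose components are homogeneous polynomials of positive
degree and whose image spans `ℂ^m` (i.e. is not contained in a proper linear subspace).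
Then there is `r > 0` such that every element of `ℂ^m` is a sum of `r` elements of the image
of `f`; consequently the same holds for every `r' ≥ r`. -/
theorem every_vector_sum_of_r_image_elements (n m : ℕ) (F : Fin m → MvPolynomial (Fin n) ℂ)
    (hhom : ∀ i, ∃ d : ℕ, 1 ≤ d ∧ F i ∈ MvPolynomial.homogeneousSubmodule (Fin n) ℂ d)
    (hspan : Submodule.span ℂ
        (Set.range fun v : Fin n → ℂ => fun i => MvPolynomial.eval v (F i)) = ⊤) :
    ∃ r : ℕ, 0 < r ∧ ∀ r' : ℕ, r ≤ r' → ∀ y : Fin m → ℂ,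
      ∃ vs : Fin r' → (Fin n → ℂ),
        y = ∑ s : Fin r', fun i => MvPolynomial.eval (vs s) (F i) := by
  classical
  set f : (Fin n → ℂ) → (Fin m → ℂ) := fun v i => MvPolynomial.eval v (F i) with hf
  choose d hd1 hdF using hhom
  set N : ℕ := Finset.univ.sup d with hN
  have hdN : ∀ i, d i ≤ N := fun i => Finset.le_sup (Finset.mem_univ i)
  have hf0 : f 0 = 0 := by
    funext i
    have h := eval_smul_of_homog (hdF i) 0 0
    rw [smul_zero, zero_pow (by have := hd1 i; omega), zero_mul] at h
    exact h
  have happ : ∀ (L : List (Fin n → ℂ)) (i : Fin m),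
      ((L.map f).sum) i = (L.map (fun v => f v i)).sum := by
    intro L i
    induction L with
    | nil => rfl
    | cons a L ih => simp [ih]
  have hscale : ∀ (c : ℂ) (w : Fin n → ℂ), ∃ L : List (Fin n → ℂ),
      L.length = lenN N ∧ (L.map f).sum = c • f w := by
    intro c w
    obtain ⟨L, hlen, hsum⟩ := exists_powersum_list N c
    refine ⟨L.map (· • w), by simp [hlen], ?_⟩
    funext i
    rw [happ, List.map_map]
    have h1 : (fun v => f v i) ∘ (fun x : ℂ => x • w) = fun x : ℂ => x ^ d i * f w i := by
      funext x
      exact eval_smul_of_homog (hdF i) x w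
    rw [h1]
    have h2 : ∀ M : List ℂ, (M.map fun x : ℂ => x ^ d i * f w i).sum
        = (M.map (· ^ d i)).sum * f w i := by
      intro M
      induction M with
      | nil => simp
      | cons a M ih => simp only [List.map_cons, List.sum_cons, ih]; ring
    rw [h2, hsum (d i) (hd1 i) (hdN i)]
    simp
  obtain ⟨s, hsub, hspan2, hli⟩ := exists_linearIndependent ℂ (Set.range f)
  rw [hspan] at hspan2
  have hsfin : s.Finite := hli.setFinite
  haveI := hsfin.fintype
  let B : Module.Basis s ℂ (Fin m → ℂ) := Module.Basis.mk hli (by rw [Subtype.range_coe, hspan2])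
  have hw : ∀ v : s, ∃ u, f u = (v : Fin m → ℂ) := fun v => hsub v.2
  choose w hwf using hw
  set K := Fintype.card s with hK
  set r0 := K * lenN N with hr0
  have hrep : ∀ y : Fin m → ℂ, ∃ L : List (Fin n → ℂ), L.length = r0 ∧ (L.map f).sum = y := by
    intro y
    have key : ∀ t : Finset s, ∃ L : List (Fin n → ℂ), L.length = t.card * lenN N ∧
        (L.map f).sum = ∑ v ∈ t, B.repr y v • (v : Fin m → ℂ) := by
      intro t
      induction t using Finset.induction with
      | empty => exact ⟨[], by simp, by simp⟩
      | @insert a t ha ih =>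
        obtain ⟨L, hlen, hLsum⟩ := ih
        obtain ⟨L2, hlen2, hL2sum⟩ := hscale (B.repr y a) (w a)
        rw [hwf a] at hL2sum
        refine ⟨L2 ++ L, ?_, ?_⟩
        · rw [List.length_append, hlen, hlen2, Finset.card_insert_of_notMem ha]
          ring
        · rw [List.map_append, List.sum_append, hLsum, hL2sum, Finset.sum_insert ha]
    obtain ⟨L, hlen, hLsum⟩ := key Finset.univ
    refine ⟨L, by rw [hlen, hr0, hK]; rfl, ?_⟩
    rw [hLsum]
    have : ∀ v ∈ (Finset.univ : Finset s), B.repr y v • (v : Fin m → ℂ) = B.repr y v • B v :=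
      fun v _ => by rw [Module.Basis.mk_apply]
    rw [Finset.sum_congr rfl this, B.sum_repr y]
  refine ⟨r0 + 1, by omega, ?_⟩
  intro r' hr' y
  obtain ⟨L, hlen, hLsum⟩ := hrep y
  set L' := L ++ List.replicate (r' - r0) 0 with hL'
  have hlen' : L'.length = r' := by
    rw [hL', List.length_append, hlen, List.length_replicate]
    omega
  have hsum' : (L'.map f).sum = y := by
    rw [hL', List.map_append, List.sum_append, hLsum, List.map_replicate, hf0]
    simp
  obtain ⟨g, hg⟩ := exists_fn f L' r' hlen'
  exact ⟨g, by rw [← hsum', hg]⟩
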